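/- Fix integers a ≥ 2 and b ≥ 1, and set f = a·b. Then the limit as n → ∞ (over natural numbers n) of the real sequence C(a·n, f) / C(n, b)^a equals (f^f / f!) · (b! / b^b)^a, equivalently a^{ab} · (b!)^a / (ab)!. -/

import Mathlib

open Filter Finset

lemma cast_choose_prod (m k : ℕ) (h : k ≤ m) :
    (m.choose k : ℝ) = (∏ i ∈ Finset.range k, ((m : ℝ) - i)) / (Nat.factorial k) := by
  have hprod : (∏ i ∈ Finset.range k, ((m : ℝ) - i)) = (m.descFactorial k : ℝ) := by
    rw [Nat.descFactorial_eq_prod_range, Nat.cast_prod]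
    refine Finset.prod_congr rfl fun i hi => ?_
    rw [Finset.mem_range] at hi
    rw [Nat.cast_sub (le_trans hi.le h)]
  rw [hprod, Nat.descFactorial_eq_factorial_mul_choose, Nat.cast_mul]
  field_simp

lemma tendsto_prod_aux (c : ℝ) (k : ℕ) :
    Tendsto (fun n : ℕ => ∏ i ∈ Finset.range k, (c - (i : ℝ) / n)) atTop (nhds (c ^ k)) := by
  have : (c : ℝ) ^ k = ∏ _i ∈ Finset.range k, c := by
    rw [Finset.prod_const, Finset.card_range]
  rw [this]
  refine tendsto_finset_prod _ fun i _ => ?_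
  have h0 : Tendsto (fun n : ℕ => (i : ℝ) / n) atTop (nhds 0) :=
    Tendsto.div_atTop tendsto_const_nhds tendsto_natCast_atTop_atTop
  simpa using tendsto_const_nhds.sub h0

theorem revealing_factor_limit (a b : ℕ) (ha : 2 ≤ a) (hb : 1 ≤ b)
    (f : ℕ) (hf : f = a * b) :
    Filter.Tendsto
        (fun n : ℕ => ((a * n).choose f : ℝ) / ((n.choose b : ℝ)) ^ a)
        Filter.atTop
        (nhds (((f : ℝ) ^ f / (Nat.factorial f : ℝ)) *
          ((Nat.factorial b : ℝ) / (b : ℝ) ^ b) ^ a))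
    ∧ ((f : ℝ) ^ f / (Nat.factorial f : ℝ)) *
          ((Nat.factorial b : ℝ) / (b : ℝ) ^ b) ^ a
        = (a : ℝ) ^ (a * b) * (Nat.factorial b : ℝ) ^ a /
            (Nat.factorial (a * b) : ℝ) := by
  have hbf : b ≤ f := by subst hf; nlinarith
  have hfpos : 0 < f := by subst hf; positivity
  have hfact : (Nat.factorial f : ℝ) ≠ 0 := Nat.cast_ne_zero.2 (Nat.factorial_ne_zero f)
  have hbfact : (Nat.factorial b : ℝ) ≠ 0 := Nat.cast_ne_zero.2 (Nat.factorial_ne_zero b)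
  have hbb : ((b : ℝ)) ^ b ≠ 0 := by positivity
  -- the key equality between the two forms of the limit
  have hkey : ((f : ℝ) ^ f / (Nat.factorial f : ℝ)) *
          ((Nat.factorial b : ℝ) / (b : ℝ) ^ b) ^ a
        = (a : ℝ) ^ f * (Nat.factorial b : ℝ) ^ a / (Nat.factorial f : ℝ) := by
    have hff : ((f : ℝ)) ^ f = (a : ℝ) ^ f * ((b : ℝ) ^ b) ^ a := by
      subst hf
      push_cast
      rw [mul_pow, ← pow_mul, mul_comm b a]
    rw [hff, div_pow]
    field_simp
  constructor
  · -- auxiliary limit function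
    set L : ℕ → ℝ := fun n =>
      ((∏ i ∈ Finset.range f, ((a : ℝ) - (i : ℝ) / n)) / (Nat.factorial f : ℝ)) *
        ((Nat.factorial b : ℝ) / (∏ j ∈ Finset.range b, ((1 : ℝ) - (j : ℝ) / n))) ^ a
      with hL
    have hLlim : Tendsto L atTop (nhds (((f : ℝ) ^ f / (Nat.factorial f : ℝ)) *
          ((Nat.factorial b : ℝ) / (b : ℝ) ^ b) ^ a)) := by
      rw [hkey]
      have h1 := (tendsto_prod_aux (a : ℝ) f).div_const (Nat.factorial f : ℝ)
      have h2 : Tendsto (fun n : ℕ =>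
          ((Nat.factorial b : ℝ) / (∏ j ∈ Finset.range b, ((1 : ℝ) - (j : ℝ) / n))) ^ a)
          atTop (nhds (((Nat.factorial b : ℝ) / 1) ^ a)) := by
        refine Tendsto.pow ?_ a
        exact (tendsto_const_nhds.div (by simpa using tendsto_prod_aux (1 : ℝ) b) one_ne_zero)
      have := h1.mul h2
      simp only [div_one] at this
      convert this using 2
      ring
    refine Tendsto.congr' ?_ hLlim
    filter_upwards [eventually_ge_atTop f, eventually_ge_atTop 1] with n hnf hn1
    have hn0 : (n : ℝ) ≠ 0 := by positivity
    have hbn : b ≤ n := le_trans hbf hnf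
    have hfan : f ≤ a * n := by
      subst hf
      exact Nat.mul_le_mul_left a hbn
    rw [cast_choose_prod _ _ hfan, cast_choose_prod _ _ hbn]
    have hP : (∏ i ∈ Finset.range f, (((a * n : ℕ) : ℝ) - i)) =
        (n : ℝ) ^ f * ∏ i ∈ Finset.range f, ((a : ℝ) - (i : ℝ) / n) := by
      rw [show (n : ℝ) ^ f = ∏ _i ∈ Finset.range f, (n : ℝ) by
        rw [Finset.prod_const, Finset.card_range]]
      rw [← Finset.prod_mul_distrib]
      refine Finset.prod_congr rfl fun i _ => ?_
      push_cast
      field_simp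
    have hQ : (∏ j ∈ Finset.range b, ((n : ℝ) - j)) =
        (n : ℝ) ^ b * ∏ j ∈ Finset.range b, ((1 : ℝ) - (j : ℝ) / n) := by
      rw [show (n : ℝ) ^ b = ∏ _j ∈ Finset.range b, (n : ℝ) by
        rw [Finset.prod_const, Finset.card_range]]
      rw [← Finset.prod_mul_distrib]
      refine Finset.prod_congr rfl fun j _ => ?_
      field_simp
    have hQne : (∏ j ∈ Finset.range b, ((1 : ℝ) - (j : ℝ) / n)) ≠ 0 := by
      refine Finset.prod_ne_zero_iff.2 fun j hj => ?_
      rw [Finset.mem_range] at hj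
      have : (j : ℝ) < n := by
        exact_mod_cast lt_of_lt_of_le hj hbn
      have : (j : ℝ) / n < 1 := by
        rw [div_lt_one (by positivity)]
        exact this
      linarith
    rw [hP, hQ, hL]
    have hnf' : (n : ℝ) ^ f = ((n : ℝ) ^ b) ^ a := by
      rw [← pow_mul, hf, mul_comm]
    rw [hnf']
    have hnb : ((n : ℝ)) ^ b ≠ 0 := by positivity
    beta_reduce
    generalize (∏ i ∈ Finset.range f, ((a : ℝ) - (i : ℝ) / n)) = P at *
    generalize (∏ j ∈ Finset.range b, ((1 : ℝ) - (j : ℝ) / n)) = Q at *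
    field_simp
    have e1 : Q ^ a * Q⁻¹ ^ a = 1 := by rw [← mul_pow, mul_inv_cancel₀ hQne, one_pow]
    have e2 : (Nat.factorial b : ℝ) ^ a * (Nat.factorial b : ℝ)⁻¹ ^ a = 1 := by
      rw [← mul_pow, mul_inv_cancel₀ hbfact, one_pow]
    linear_combination (P * (n : ℝ) ^ (a * b) * (Nat.factorial b : ℝ) ^ a *
      (Nat.factorial b : ℝ)⁻¹ ^ a) * e1 + (P * (n : ℝ) ^ (a * b)) * e2
  · rw [hkey, hf]
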